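/- With F as above (j(F)=1, F = id + higher order terms), the inverse Jacobian matrix J(G) = (Δ_i(x_j)) satisfies Σ_{j=1}^n ∂_j(Δ_i(x_j)) = 0 for each i, i.e., each row of the inverse Jacobian is divergence-free. -/

import Mathlib

/-!
STATEMENT 9: With `F ∈ GA_n^1((K))` (i.e. `Fᵢ = xᵢ + (degree ≥ 2 terms)`) and
`j(F) = 1`, the inverse Jacobian matrix `J(G) = (Δᵢ(x_j))` (the matrix inverse
of `J(F)`) satisfies `Σ_j ∂_j (Δᵢ(x_j)) = 0` for each `i`: each row of the
inverse Jacobian is divergence-free.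
-/

open MvPowerSeries

noncomputable section

set_option linter.unusedSectionVars false

variable {K : Type*} [Field K] [CharZero K] {n : ℕ}

def dgF {n : ℕ} (μ : Fin n →₀ ℕ) : ℕ := μ.sum fun _ e => e

/-- the partial derivative `∂_a` of a multivariate power series -/
def pd (a : Fin n) (f : MvPowerSeries (Fin n) K) : MvPowerSeries (Fin n) K :=
  fun ν => ((ν a + 1 : ℕ) : K) * MvPowerSeries.coeff (ν + Finsupp.single a 1) f

/-- `Δᵢ(g) := det J(F₁,…,F_{i−1}, g, F_{i+1},…,Fₙ)` -/
def Delta (F : Fin n → MvPowerSeries (Fin n) K) (i : Fin n)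
    (g : MvPowerSeries (Fin n) K) : MvPowerSeries (Fin n) K :=
  Matrix.det (Matrix.of fun a b => pd a (Function.update F i g b))

/-! ### Basic properties of `pd` -/

lemma coeff_pd (a : Fin n) (f : MvPowerSeries (Fin n) K) (ν : Fin n →₀ ℕ) :
    MvPowerSeries.coeff ν (pd a f)
      = ((ν a + 1 : ℕ) : K) * MvPowerSeries.coeff (ν + Finsupp.single a 1) f := rfl

/-- `pd a` as an additive monoid homomorphism. -/
def pdHom (a : Fin n) : MvPowerSeries (Fin n) K →+ MvPowerSeries (Fin n) K where
  toFun := pd a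
  map_zero' := by ext ν; simp [coeff_pd]
  map_add' f g := by ext ν; simp [coeff_pd, mul_add]

lemma pd_zero (a : Fin n) : pd a (0 : MvPowerSeries (Fin n) K) = 0 := (pdHom a).map_zero

lemma pd_sum (a : Fin n) {β : Type*} (s : Finset β) (f : β → MvPowerSeries (Fin n) K) :
    pd a (∑ b ∈ s, f b) = ∑ b ∈ s, pd a (f b) := map_sum (pdHom a) f s

lemma pd_zsmul (a : Fin n) (m : ℤ) (f : MvPowerSeries (Fin n) K) :
    pd a (m • f) = m • pd a f := map_zsmul (pdHom a) m f

lemma pd_one (a : Fin n) : pd a (1 : MvPowerSeries (Fin n) K) = 0 := by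
  ext ν
  have h : ν + Finsupp.single a 1 ≠ 0 := by
    intro h
    have := DFunLike.congr_fun h a
    simp [Finsupp.single_apply] at this
  simp [coeff_pd, MvPowerSeries.coeff_one, h]

/-! ### The Leibniz rule for `pd` -/

lemma coeff_add_single_X_mul (a : Fin n) (ν : Fin n →₀ ℕ) (f : MvPowerSeries (Fin n) K) :
    MvPowerSeries.coeff (ν + Finsupp.single a 1) (X a * f) = MvPowerSeries.coeff ν f := by
  rw [MvPowerSeries.coeff_mul]
  rw [Finset.sum_eq_single (Finsupp.single a 1, ν)]
  · simp [MvPowerSeries.coeff_X]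
  · rintro ⟨p, q⟩ hpq hne
    rw [Finset.HasAntidiagonal.mem_antidiagonal] at hpq
    rw [MvPowerSeries.coeff_X]
    split_ifs with hp
    · subst hp
      exfalso
      apply hne
      have : q = ν := by
        apply add_left_cancel (a := Finsupp.single a 1)
        rw [hpq, add_comm]
      rw [this]
    · rw [zero_mul]
  · intro h
    exfalso
    exact h (by rw [Finset.HasAntidiagonal.mem_antidiagonal, add_comm])

lemma X_mul_inj (a : Fin n) {f g : MvPowerSeries (Fin n) K} (h : X a * f = X a * g) : f = g := by
  ext ν
  rw [← coeff_add_single_X_mul a ν f, ← coeff_add_single_X_mul a ν g, h]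

lemma coeff_X_mul_pd (a : Fin n) (f : MvPowerSeries (Fin n) K) (ν : Fin n →₀ ℕ) :
    MvPowerSeries.coeff ν (X a * pd a f) = ((ν a : ℕ) : K) * MvPowerSeries.coeff ν f := by
  rcases Nat.eq_zero_or_pos (ν a) with h | h
  · rw [h, MvPowerSeries.coeff_mul, Finset.sum_eq_zero]
    · simp
    · rintro ⟨p, q⟩ hpq
      rw [Finset.HasAntidiagonal.mem_antidiagonal] at hpq
      rw [MvPowerSeries.coeff_X]
      split_ifs with hp
      · exfalso
        have : p a + q a = ν a := by rw [← Finsupp.add_apply, hpq]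
        have hp' : p = Finsupp.single a 1 := hp
        rw [hp', h] at this
        simp [Finsupp.single_apply] at this
      · rw [zero_mul]
  · obtain ⟨μ, rfl⟩ : ∃ μ, ν = μ + Finsupp.single a 1 := by
      refine ⟨ν - Finsupp.single a 1, ?_⟩
      rw [tsub_add_cancel_of_le (Finsupp.single_le_iff.mpr h)]
    rw [coeff_add_single_X_mul, coeff_pd]
    congr 2
    simp [Finsupp.add_apply, Finsupp.single_apply]

lemma pd_mul (a : Fin n) (f g : MvPowerSeries (Fin n) K) :
    pd a (f * g) = pd a f * g + f * pd a g := by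
  apply X_mul_inj a
  have hr : X a * (pd a f * g + f * pd a g)
      = (X a * pd a f) * g + f * (X a * pd a g) := by ring
  rw [hr]
  ext ν
  rw [coeff_X_mul_pd, map_add, MvPowerSeries.coeff_mul, MvPowerSeries.coeff_mul,
    MvPowerSeries.coeff_mul, Finset.mul_sum, ← Finset.sum_add_distrib]
  refine Finset.sum_congr rfl ?_
  rintro ⟨p, q⟩ hpq
  rw [Finset.HasAntidiagonal.mem_antidiagonal] at hpq
  rw [coeff_X_mul_pd, coeff_X_mul_pd]
  have hcast : ((ν a : ℕ) : K) = ((p a : ℕ) : K) + ((q a : ℕ) : K) := by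
    rw [← Nat.cast_add, ← Finsupp.add_apply, hpq]
  rw [hcast]
  ring

lemma pd_prod {β : Type*} [DecidableEq β] (a : Fin n) (s : Finset β)
    (f : β → MvPowerSeries (Fin n) K) :
    pd a (∏ b ∈ s, f b) = ∑ c ∈ s, pd a (f c) * ∏ b ∈ s.erase c, f b := by
  induction s using Finset.induction_on with
  | empty => simp [pd_one]
  | @insert x t hx ih =>
    rw [Finset.prod_insert hx, pd_mul, ih, Finset.sum_insert hx, Finset.erase_insert hx,
      Finset.mul_sum]
    congr 1
    refine Finset.sum_congr rfl fun c hc => ?_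
    have hcx : c ≠ x := fun h => hx (h ▸ hc)
    rw [Finset.erase_insert_of_ne hcx.symm, Finset.prod_insert
      (fun h => hx (Finset.mem_of_mem_erase h))]
    ring

/-! ### Symmetry of second partials and derivatives of `X` -/

lemma pd_pd (a b : Fin n) (f : MvPowerSeries (Fin n) K) :
    pd a (pd b f) = pd b (pd a f) := by
  ext ν
  rw [coeff_pd, coeff_pd, coeff_pd, coeff_pd]
  rw [show ν + Finsupp.single b 1 + Finsupp.single a 1
      = ν + Finsupp.single a 1 + Finsupp.single b 1 from add_right_comm _ _ _]
  rcases eq_or_ne a b with rfl | h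
  · ring
  · simp only [Finsupp.add_apply, Finsupp.single_apply, if_neg h, if_neg (Ne.symm h)]
    push_cast
    ring

lemma pd_X (a l : Fin n) :
    pd a (X l : MvPowerSeries (Fin n) K) = if a = l then 1 else 0 := by
  ext ν
  rw [coeff_pd, MvPowerSeries.coeff_X]
  rcases eq_or_ne a l with rfl | h
  · rw [if_pos rfl]
    rcases eq_or_ne ν 0 with rfl | hν
    · simp
    · have : ν + Finsupp.single a 1 ≠ Finsupp.single a 1 := by
        intro hcon
        exact hν (by simpa using add_right_cancel (b := Finsupp.single a 1) (by simpa using hcon))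
      simp [this, MvPowerSeries.coeff_one, hν]
  · have : ν + Finsupp.single a 1 ≠ Finsupp.single l 1 := by
      intro hcon
      have := DFunLike.congr_fun hcon a
      simp [Finsupp.single_apply, Ne.symm h] at this
    simp [this, h]

/-! ### `Δᵢ(x_l)` is the adjugate of the Jacobian matrix -/

lemma delta_eq_adjugate (F : Fin n → MvPowerSeries (Fin n) K) (i l : Fin n) :
    Delta F i (MvPowerSeries.X l)
      = Matrix.adjugate (Matrix.of fun a b => pd a (F b)) i l := by
  set M : Matrix (Fin n) (Fin n) (MvPowerSeries (Fin n) K) :=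
    Matrix.of fun a b => pd a (F b) with hM
  have hN : (Matrix.of fun a b => pd a (Function.update F i (X l) b))
      = M.updateCol i (Pi.single l 1) := by
    ext a b
    rcases eq_or_ne b i with rfl | hb
    · simp [Matrix.updateCol_apply, pd_X, Pi.single_apply, hM]
    · simp [Matrix.updateCol_apply, hb, Function.update_of_ne hb, hM]
  rw [Delta, hN, ← Matrix.det_transpose, ← Matrix.updateRow_transpose,
    ← Matrix.adjugate_apply, ← Matrix.adjugate_transpose, Matrix.transpose_apply]

/-- Leibniz-formula expansion of `Δᵢ(x_j)`. -/
lemma delta_expand (F : Fin n → MvPowerSeries (Fin n) K) (i j : Fin n) :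
    Delta F i (MvPowerSeries.X j)
      = ∑ σ : Equiv.Perm (Fin n), (Equiv.Perm.sign σ : ℤ) •
          ((if σ i = j then (1 : MvPowerSeries (Fin n) K) else 0) *
            ∏ b ∈ Finset.univ.erase i, pd (σ b) (F b)) := by
  rw [Delta, Matrix.det_apply]
  refine Finset.sum_congr rfl fun σ _ => ?_
  rw [Units.smul_def]
  congr 1
  rw [← Finset.mul_prod_erase Finset.univ _ (Finset.mem_univ i)]
  congr 1
  · simp [pd_X]
  · refine Finset.prod_congr rfl fun b hb => ?_
    have : b ≠ i := Finset.ne_of_mem_erase hb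
    simp [Function.update_of_ne this]

/-- If `Fᵢ = xᵢ + (terms of degree ≥ 2)` and `j(F) = 1`,
then the matrix `(Δᵢ(x_j))` is the inverse of the Jacobian matrix `J(F)`,
and each of its rows is divergence-free: `Σ_j ∂_j (Δᵢ(x_j)) = 0`. -/
theorem inverse_jacobian_divergence_free
    (F : Fin n → MvPowerSeries (Fin n) K)
    (hF : ∀ i (μ : Fin n →₀ ℕ), dgF μ ≤ 1 →
      MvPowerSeries.coeff μ (F i) = MvPowerSeries.coeff μ (MvPowerSeries.X i))
    (hjac : Matrix.det (Matrix.of fun a b => pd a (F b)) = (1 : MvPowerSeries (Fin n) K)) :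
    (Matrix.of fun i l => Delta F i (MvPowerSeries.X l)) *
        (Matrix.of fun l j => pd l (F j)) = 1 ∧
    ∀ i, ∑ j, pd j (Delta F i (MvPowerSeries.X j)) = 0 := by
  constructor
  · have h1 : (Matrix.of fun i l => Delta F i (MvPowerSeries.X l))
        = Matrix.adjugate (Matrix.of fun a b => pd a (F b)) := by
      exact Matrix.ext fun i l => delta_eq_adjugate F i l
    rw [h1, Matrix.adjugate_mul, hjac, one_smul]
  · intro i
    have hterm : ∀ j, pd j (Delta F i (MvPowerSeries.X j))
        = ∑ σ : Equiv.Perm (Fin n), (Equiv.Perm.sign σ : ℤ) •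
            (if σ i = j then pd j (∏ b ∈ Finset.univ.erase i, pd (σ b) (F b)) else 0) := by
      intro j
      rw [delta_expand, pd_sum]
      refine Finset.sum_congr rfl fun σ _ => ?_
      rw [pd_zsmul]
      congr 1
      rcases eq_or_ne (σ i) j with h | h
      · simp [h]
      · simp [h, pd_zero]
    rw [Finset.sum_congr rfl fun j _ => hterm j, Finset.sum_comm]
    have hcollapse : ∀ σ : Equiv.Perm (Fin n),
        (∑ j, (Equiv.Perm.sign σ : ℤ) •
          (if σ i = j then pd j (∏ b ∈ Finset.univ.erase i, pd (σ b) (F b)) else 0))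
        = ∑ c ∈ Finset.univ.erase i, (Equiv.Perm.sign σ : ℤ) •
            (pd (σ i) (pd (σ c) (F c)) *
              ∏ b ∈ (Finset.univ.erase i).erase c, pd (σ b) (F b)) := by
      intro σ
      rw [← Finset.smul_sum, ← Finset.smul_sum]
      congr 1
      rw [Finset.sum_ite_eq, if_pos (Finset.mem_univ _), pd_prod]
    rw [Finset.sum_congr rfl fun σ _ => hcollapse σ, Finset.sum_comm]
    refine Finset.sum_eq_zero fun c hc => ?_
    have hci : c ≠ i := Finset.ne_of_mem_erase hc
    refine Finset.sum_ninvolution (fun σ => σ * Equiv.swap i c) ?_ ?_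
      (fun _ => Finset.mem_univ _) ?_
    · intro σ
      have hsign : ((Equiv.Perm.sign (σ * Equiv.swap i c) : ℤˣ) : ℤ)
          = -((Equiv.Perm.sign σ : ℤˣ) : ℤ) := by
        rw [Equiv.Perm.sign_mul, Equiv.Perm.sign_swap (Ne.symm hci)]
        simp
      have hQ : pd ((σ * Equiv.swap i c) i) (pd ((σ * Equiv.swap i c) c) (F c)) *
            ∏ b ∈ (Finset.univ.erase i).erase c, pd ((σ * Equiv.swap i c) b) (F b)
          = pd (σ i) (pd (σ c) (F c)) *
            ∏ b ∈ (Finset.univ.erase i).erase c, pd (σ b) (F b) := by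
        rw [Equiv.Perm.mul_apply, Equiv.Perm.mul_apply, Equiv.swap_apply_left,
          Equiv.swap_apply_right, pd_pd]
        congr 1
        refine Finset.prod_congr rfl fun b hb => ?_
        have hbc : b ≠ c := Finset.ne_of_mem_erase hb
        have hbi : b ≠ i := Finset.ne_of_mem_erase (Finset.mem_of_mem_erase hb)
        rw [Equiv.Perm.mul_apply, Equiv.swap_apply_of_ne_of_ne hbi hbc]
      rw [hsign, hQ, neg_smul, add_neg_cancel]
    · intro σ _ heq
      have := congr_arg (fun τ : Equiv.Perm (Fin n) => τ i) heq
      simp only [Equiv.Perm.mul_apply, Equiv.swap_apply_left] at this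
      exact hci (σ.injective this)
    · intro σ
      show σ * Equiv.swap i c * Equiv.swap i c = σ
      rw [mul_assoc, Equiv.swap_mul_self, mul_one]

end
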